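/- Let B = k[z,w]/(zw). A B-linear endomorphism φ of B/(w) factors through a finitely generated free B-module (i.e., is a composite B/(w) → Bⁿ → B/(w) of B-linear maps for some n) if and only if φ(1̄) lies in the submodule z·(B/(w)) of B/(w). -/

import Mathlib

set_option synthInstance.maxHeartbeats 1000000
set_option maxHeartbeats 1000000

/-- `B = k[z,w]/(zw)`, where `z = X 0` and `w = X 1`. -/
abbrev B (k : Type*) [Field k] : Type _ :=
  MvPolynomial (Fin 2) k ⧸
    Ideal.span {(MvPolynomial.X 0 : MvPolynomial (Fin 2) k) * MvPolynomial.X 1}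

/-- The class of `z` in `B`. -/
noncomputable abbrev zB (k : Type*) [Field k] : B k :=
  Ideal.Quotient.mk _ (MvPolynomial.X 0)

/-- The class of `w` in `B`. -/
noncomputable abbrev wB (k : Type*) [Field k] : B k :=
  Ideal.Quotient.mk _ (MvPolynomial.X 1)

/-- `B/(w)`. -/
abbrev Bw (k : Type*) [Field k] : Type _ := B k ⧸ Ideal.span {wB k}

/-- `B/(z)`. -/
abbrev Bz (k : Type*) [Field k] : Type _ := B k ⧸ Ideal.span {zB k}

lemma w_mul_zero {k : Type*} [Field k] (b : B k) (hb : wB k * b = 0) :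
    ∃ c, b = zB k * c := by
  obtain ⟨f, rfl⟩ := Ideal.Quotient.mk_surjective b
  rw [← map_mul, Ideal.Quotient.eq_zero_iff_mem, Ideal.mem_span_singleton] at hb
  obtain ⟨q, hq⟩ := hb
  have hf : f = MvPolynomial.X 0 * q := by
    have h1 : (MvPolynomial.X 1 : MvPolynomial (Fin 2) k) * f
        = MvPolynomial.X 1 * (MvPolynomial.X 0 * q) := by rw [hq]; ring
    exact mul_left_cancel₀ (MvPolynomial.X_ne_zero 1) h1
  exact ⟨Ideal.Quotient.mk _ q, by rw [hf, map_mul]⟩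

lemma wz_zero {k : Type*} [Field k] : wB k * zB k = 0 := by
  rw [← map_mul, Ideal.Quotient.eq_zero_iff_mem]
  exact Ideal.mem_span_singleton.mpr ⟨1, by ring⟩

lemma smul_mk {k : Type*} [Field k] (r : B k) (x : B k) :
    r • (Ideal.Quotient.mk (Ideal.span {wB k}) x : Bw k)
      = Ideal.Quotient.mk _ (r * x) := by
  rw [← Ideal.Quotient.mk_eq_mk, ← Ideal.Quotient.mk_eq_mk,
    ← Submodule.Quotient.mk_smul, smul_eq_mul]

lemma smul_eq_mk_mul {k : Type*} [Field k] (r : B k) (y : Bw k) :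
    r • y = Ideal.Quotient.mk (Ideal.span {wB k}) r * y := by
  obtain ⟨t, rfl⟩ := Ideal.Quotient.mk_surjective y
  rw [smul_mk, map_mul]

/-- A `B`-linear endomorphism `φ` of `B/(w)` factors through a finitely generated free
`B`-module if and only if `φ(1̄)` lies in `z·(B/(w))`. -/
theorem stmt6 (k : Type*) [Field k] [IsAlgClosed k] [CharZero k]
    (φ : Bw k →ₗ[B k] Bw k) :
    (∃ (n : ℕ) (g : Bw k →ₗ[B k] (Fin n → B k)) (h : (Fin n → B k) →ₗ[B k] Bw k),
        φ = h.comp g) ↔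
      φ 1 ∈ Ideal.span {(Ideal.Quotient.mk (Ideal.span {wB k}) (zB k) : Bw k)} := by
  constructor
  · rintro ⟨n, g, h, rfl⟩
    have h1 : (1 : Bw k) = Ideal.Quotient.mk _ (1 : B k) := rfl
    have hw1 : wB k • (1 : Bw k) = 0 := by
      rw [h1, smul_mk, mul_one, Ideal.Quotient.eq_zero_iff_mem]
      exact Ideal.subset_span rfl
    have hw : wB k • (g 1) = 0 := by rw [← map_smul, hw1, map_zero]
    choose v hv using fun i => w_mul_zero (g 1 i)
      (by have := congrFun hw i; simpa using this)
    have hg1 : g 1 = zB k • v := funext fun i => by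
      rw [hv i]; rfl
    simp only [LinearMap.comp_apply, hg1, map_smul]
    exact Ideal.mem_span_singleton'.mpr ⟨h v, by rw [smul_eq_mk_mul]; exact mul_comm (h v) _⟩
  · intro hφ
    obtain ⟨a, ha⟩ := Ideal.mem_span_singleton'.mp hφ
    obtain ⟨c, rfl⟩ := Ideal.Quotient.mk_surjective a
    set base : B k →ₗ[B k] B k := LinearMap.toSpanSingleton (B k) (B k) (c * zB k)
    have hker : Ideal.span {wB k} ≤ LinearMap.ker base := by
      rw [Ideal.span_le]
      rintro x rfl
      simp only [SetLike.mem_coe, LinearMap.mem_ker, base,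
        LinearMap.toSpanSingleton_apply, smul_eq_mul]
      rw [← mul_assoc, mul_comm (wB k) c, mul_assoc, wz_zero, mul_zero]
    refine ⟨1, LinearMap.pi fun _ => (Ideal.span {wB k}).liftQ base hker,
      ((Ideal.span {wB k}).mkQ).comp (LinearMap.proj 0), ?_⟩
    apply LinearMap.ext
    intro x
    obtain ⟨b, rfl⟩ := Ideal.Quotient.mk_surjective x
    have lhs : φ (Ideal.Quotient.mk _ b) = b • φ 1 := by
      rw [← map_smul]
      congr 1
      rw [show (1 : Bw k) = Ideal.Quotient.mk _ (1 : B k) from rfl, smul_mk, mul_one]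
    rw [lhs, ← ha]
    simp only [LinearMap.comp_apply, LinearMap.pi_apply, LinearMap.proj_apply,
      Submodule.mkQ_apply, Ideal.Quotient.mk_eq_mk]
    rw [← Ideal.Quotient.mk_eq_mk b, Submodule.liftQ_apply]
    simp only [base, LinearMap.toSpanSingleton_apply, smul_eq_mul,
      Ideal.Quotient.mk_eq_mk]
    rw [map_mul, map_mul, smul_eq_mk_mul]
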